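/- Under monotone decreasing independent criteria, the greedy farthest-reach step is optimal per criterion: for a vertex x = (x_1,…,x_m) of the prefix graph and a criterion C_j, the vertex y with y_i = max{b : τ_i[x_i+1, b] fulfils C_j or b = x_i} dominates or equals every vertex reachable from x by a single edge labelled C_j, and y itself is reachable from x by a single C_j-edge (provided y ≠ x). -/
import Mathlib


/-- under monotone decreasing independent criteria, the greedy
farthest-reach step is optimal per criterion.  Here `FulI j i a b` abstracts
"`τ_i[a+1, b]` fulfils `C_j`" (a nonempty segment, so `a < b ≤ n`), a prefix-graph edge
`x → x'` labelled `C_j` requires componentwise `x ≤ x'`, `x ≠ x'`, and every nonempty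
segment `τ_i[x_i+1, x'_i]` to fulfil `C_j`, and `y` is the coordinatewise farthest reach
from `x` under `C_j`.  Then `y` dominates or equals every vertex reachable from `x` by a
single `C_j`-edge, and (provided `y ≠ x`) `y` itself is reachable from `x` by a single
`C_j`-edge. -/
theorem stmt_10 (m n k : ℕ)
    (FulI : Fin k → Fin m → ℕ → ℕ → Prop)
    (hbdd : ∀ j i a b, FulI j i a b → a < b ∧ b ≤ n)
    (hmono : ∀ j i a b a' b', FulI j i a b → a ≤ a' → a' < b' → b' ≤ b →
      FulI j i a' b')
    (x y : Fin m → ℕ) (j : Fin k)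
    (hx : ∀ i, x i ≤ n)
    (hy : ∀ i,
      (y i = x i ∧ ∀ b, ¬ FulI j i (x i) b) ∨
      (FulI j i (x i) (y i) ∧ ∀ b, FulI j i (x i) b → b ≤ y i)) :
    (∀ x' : Fin m → ℕ,
      ((∀ i, x i ≤ x' i) ∧ x ≠ x' ∧ ∀ i, x i < x' i → FulI j i (x i) (x' i)) →
      ∀ i, x' i ≤ y i) ∧
    (y ≠ x →
      (∀ i, x i ≤ y i) ∧ x ≠ y ∧ ∀ i, x i < y i → FulI j i (x i) (y i)) := by
  have hxy : ∀ i, x i ≤ y i := by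
    intro i
    rcases hy i with ⟨h1, _⟩ | ⟨h1, _⟩
    · omega
    · exact (hbdd j i _ _ h1).1.le
  constructor
  · rintro x' ⟨hle, hne, hful⟩ i
    rcases lt_or_eq_of_le (hle i) with hlt | heq
    · rcases hy i with ⟨_, h2⟩ | ⟨_, h2⟩
      · exact absurd (hful i hlt) (h2 _)
      · exact h2 _ (hful i hlt)
    · rw [← heq]; exact hxy i
  · intro hne
    refine ⟨hxy, Ne.symm hne, fun i hlt => ?_⟩
    rcases hy i with ⟨h1, _⟩ | ⟨h1, _⟩
    · omega
    · exact h1
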